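/- arXiv:math/0001053 — 3 statements merged into one kernel-verified Lean document; each statement's English description precedes it below -/
import Mathlib

section
/- For n ≥ 5, the number of cd-words of degree n that are of the form c^i d c^j with min{i,j} ≤ 1, or of the form c^i d c d ⋯ c d c^j with at least two d's alternating with single c's between consecutive d's, equals ⌊C(n-2,2)/3⌋ + 4. -/
/-- The degree of a cd-word, encoded as a list of booleans
(`false` = `c`, degree 1; `true` = `d`, degree 2). -/
def cdDeg (w : List Bool) : ℕ := (w.map fun b => if b then 2 else 1).sum

/-- `w` has the form `c^i d c^j` with `min i j ≤ 1`. -/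
def TypeA (w : List Bool) : Prop :=
  ∃ i j : ℕ, min i j ≤ 1 ∧
    w = List.replicate i false ++ [true] ++ List.replicate j false

/-- `w` has the form `c^i d (c d)^{r-1} c^j` with `r ≥ 2` d's alternating with
single c's. -/
def TypeB (w : List Bool) : Prop :=
  ∃ i r j : ℕ, 2 ≤ r ∧
    w = List.replicate i false ++ [true] ++
        (List.replicate (r - 1) [false, true]).flatten ++ List.replicate j false

def G (i k j : ℕ) : List Bool :=
  List.replicate i false ++ true ::
    ((List.replicate k [false, true]).flatten ++ List.replicate j false)

lemma cdDeg_append (a b : List Bool) : cdDeg (a ++ b) = cdDeg a + cdDeg b := by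
  simp [cdDeg]

lemma cdDeg_flat (k : ℕ) : cdDeg (List.replicate k [false, true]).flatten = 3 * k := by
  induction k with
  | zero => simp [cdDeg]
  | succ m ih => simp [List.replicate_succ, cdDeg_append, cdDeg, ih] at *; omega

lemma cdDeg_repl (i : ℕ) : cdDeg (List.replicate i false) = i := by
  simp [cdDeg]

lemma G_eq (i k j : ℕ) : G i k j = List.replicate i false ++ [true] ++
      (List.replicate k [false, true]).flatten ++ List.replicate j false := by
  simp [G]

lemma cdDeg_G (i k j : ℕ) : cdDeg (G i k j) = i + 3 * k + j + 2 := by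
  rw [G_eq, cdDeg_append, cdDeg_append, cdDeg_append, cdDeg_repl, cdDeg_repl, cdDeg_flat]
  simp [cdDeg]; ring

lemma lead_aux (i : ℕ) (t : List Bool) :
    ((List.replicate i false ++ true :: t).takeWhile (fun b => !b)).length = i := by
  induction i with
  | zero => simp
  | succ m ih => simp [List.replicate_succ, ih]

lemma lead_G (i k j : ℕ) : ((G i k j).takeWhile (fun b => !b)).length = i :=
  lead_aux i _

lemma count_flat (k : ℕ) : (List.replicate k [false, true]).flatten.count true = k := by
  induction k with
  | zero => simp
  | succ m ih => simp [List.replicate_succ, ih]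

lemma count_G (i k j : ℕ) : (G i k j).count true = k + 1 := by
  simp [G, List.count_append, List.count_replicate, List.count_cons, count_flat]

lemma len_flat (k : ℕ) : (List.replicate k [false, true]).flatten.length = 2 * k := by
  induction k with
  | zero => simp
  | succ m ih => simp [List.replicate_succ, ih]; omega

lemma len_G (i k j : ℕ) : (G i k j).length = i + 2 * k + j + 1 := by
  simp [G, len_flat]; omega

lemma G_inj {i k j i' k' j' : ℕ} (h : G i k j = G i' k' j') :
    i = i' ∧ k = k' ∧ j = j' := by
  have h1 := congrArg (fun w => (w.takeWhile (fun b => !b)).length) h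
  have h2 := congrArg (fun w => w.count true) h
  have h3 := congrArg List.length h
  simp only [lead_G, count_G, len_G] at h1 h2 h3
  omega

lemma sumg (m : ℕ) :
    ∑ s ∈ Finset.range (m + 1), (m + 1 - 3 * s) = (m + 3) * (m + 2) / 6 := by
  induction m using Nat.strong_induction_on with
  | _ m ih =>
    match m with
    | 0 => decide
    | 1 => decide
    | 2 => decide
    | (k+3) =>
      have hk := ih k (by omega)
      rw [Finset.sum_range_succ']
      have hcong : ∀ s ∈ Finset.range (k + 3), (k + 3 + 1 - 3 * (s + 1)) = (k + 1 - 3 * s) := by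
        intro s _; omega
      rw [Finset.sum_congr rfl hcong, Finset.sum_range_succ, Finset.sum_range_succ, hk]
      have h1 : k + 1 - 3 * (k + 1) = 0 := by omega
      have h2 : k + 1 - 3 * (k + 2) = 0 := by omega
      rw [h1, h2]
      have hmul : (k + 3 + 3) * (k + 3 + 2) = (k + 3) * (k + 2) + 6 * (k + 4) := by ring
      generalize hA : (k + 3) * (k + 2) = A at *
      generalize hB : (k + 3 + 3) * (k + 3 + 2) = B at *
      omega

/-- For `n ≥ 5`, the number of cd-words of degree `n` of the special forms
`c^i d c^j` (with `min i j ≤ 1`) or `c^i d c d ⋯ c d c^j` (at least two `d`'s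
alternating with `c`'s) is `⌊C(n-2,2)/3⌋ + 4`. -/
theorem card_special_cd_words (n : ℕ) (hn : 5 ≤ n) :
    {w : List Bool | cdDeg w = n ∧ (TypeA w ∨ TypeB w)}.ncard
      = (n - 2).choose 2 / 3 + 4 := by
  classical
  set Wa : Finset (List Bool) :=
    {G 0 0 (n-2), G 1 0 (n-3), G (n-3) 0 1, G (n-2) 0 0} with hWa
  set Wb : Finset (List Bool) :=
    (Finset.range (n-4)).biUnion
      (fun s => (Finset.range (n-4-3*s)).image (fun i => G i (s+1) (n-5-3*s-i))) with hWb
  have hS : {w : List Bool | cdDeg w = n ∧ (TypeA w ∨ TypeB w)} = ↑(Wa ∪ Wb) := by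
    ext w
    simp only [Set.mem_setOf_eq, Finset.coe_union, Set.mem_union, Finset.mem_coe, hWa, hWb,
      Finset.mem_insert, Finset.mem_singleton, Finset.mem_biUnion, Finset.mem_image,
      Finset.mem_range]
    constructor
    · rintro ⟨hdeg, hA | hB⟩
      · obtain ⟨i, j, hmin, rfl⟩ := hA
        have hw : List.replicate i false ++ [true] ++ List.replicate j false = G i 0 j := by
          simp [G]
        rw [hw] at hdeg ⊢
        rw [cdDeg_G] at hdeg
        left
        rcases (by omega : i = 0 ∨ i = 1 ∨ j = 0 ∨ j = 1) with rfl | rfl | rfl | rfl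
        · left; congr 1; omega
        · right; left; congr 1; omega
        · right; right; right; congr 1; omega
        · right; right; left; congr 1; omega
      · obtain ⟨i, r, j, hr, rfl⟩ := hB
        have hw : List.replicate i false ++ [true] ++
            (List.replicate (r-1) [false, true]).flatten ++ List.replicate j false
            = G i (r-1) j := (G_eq i (r-1) j).symm
        rw [hw] at hdeg ⊢
        rw [cdDeg_G] at hdeg
        right
        refine ⟨r - 2, by omega, i, by omega, ?_⟩
        have h1 : (r - 2) + 1 = r - 1 := by omega
        have h2 : n - 5 - 3 * (r - 2) - i = j := by omega
        rw [h1, h2]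
    · rintro (h | ⟨s, hs, i, hi, rfl⟩)
      · rcases h with rfl | rfl | rfl | rfl
        · exact ⟨by rw [cdDeg_G]; omega, Or.inl ⟨0, n-2, by simp, by simp [G]⟩⟩
        · exact ⟨by rw [cdDeg_G]; omega, Or.inl ⟨1, n-3, by simp, by simp [G]⟩⟩
        · exact ⟨by rw [cdDeg_G]; omega, Or.inl ⟨n-3, 1, by simp, by simp [G]⟩⟩
        · exact ⟨by rw [cdDeg_G]; omega, Or.inl ⟨n-2, 0, by simp, by simp [G]⟩⟩
      · refine ⟨by rw [cdDeg_G]; omega, Or.inr ⟨i, s+2, n-5-3*s-i, by omega, ?_⟩⟩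
        have h1 : (s + 2) - 1 = s + 1 := by omega
        rw [h1, ← G_eq]
  rw [hS, Set.ncard_coe_finset]
  have hdisj : Disjoint Wa Wb := by
    rw [Finset.disjoint_left]
    intro w hwa hwb
    simp only [hWa, Finset.mem_insert, Finset.mem_singleton] at hwa
    simp only [hWb, Finset.mem_biUnion, Finset.mem_image, Finset.mem_range] at hwb
    obtain ⟨s, _, i, _, hw⟩ := hwb
    rcases hwa with rfl | rfl | rfl | rfl <;>
      · have := (G_inj hw).2.1; omega
  rw [Finset.card_union_of_disjoint hdisj]
  have hcardA : Wa.card = 4 := by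
    rw [hWa]
    rw [Finset.card_insert_of_notMem, Finset.card_insert_of_notMem,
      Finset.card_insert_of_notMem, Finset.card_singleton]
    · simp only [Finset.mem_singleton]
      intro h; have := (G_inj h).1; omega
    · simp only [Finset.mem_insert, Finset.mem_singleton]
      rintro (h | h) <;> · have := (G_inj h).1; omega
    · simp only [Finset.mem_insert, Finset.mem_singleton]
      rintro (h | h | h) <;> · have := (G_inj h).1; omega
  have hcardB : Wb.card = (n - 2) * (n - 3) / 6 := by
    rw [hWb, Finset.card_biUnion]
    · have heach : ∀ s ∈ Finset.range (n-4),
          ((Finset.range (n-4-3*s)).image (fun i => G i (s+1) (n-5-3*s-i))).card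
            = n - 4 - 3 * s := by
        intro s _
        rw [Finset.card_image_of_injOn, Finset.card_range]
        intro a _ b _ hab
        exact (G_inj hab).1
      rw [Finset.sum_congr rfl heach]
      have hm : n - 4 = (n - 5) + 1 := by omega
      rw [hm]
      rw [sumg]
      have h2 : n - 5 + 3 = n - 2 := by omega
      have h3 : n - 5 + 2 = n - 3 := by omega
      rw [h2, h3]
    · intro s _ t _ hst
      rw [Function.onFun, Finset.disjoint_left]
      rintro w hws hwt
      simp only [Finset.mem_image, Finset.mem_range] at hws hwt
      obtain ⟨a, _, ha⟩ := hws
      obtain ⟨b, _, hb⟩ := hwt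
      rw [← ha] at hb
      have := (G_inj hb).2.1
      omega
  rw [hcardA, hcardB, Nat.choose_two_right]
  have h1 : n - 2 - 1 = n - 3 := by omega
  rw [h1, Nat.div_div_eq_div_mul]
  omega
end

section
/- Let w be a cd-word of degree n containing r copies of d. When each d in an 'Eulerian' ce-word v_Q (Q an even subset of [1,n]) is produced by expanding consecutive pairs ee as cc − 2d, the cd-word w occurs in the expansion of v_Q if and only if supp(w) ⊆_e Q; consequently, for an Eulerian poset with ce-index coefficients (L_Q), the cd-index coefficient of w is [w] = (−2)^r Σ_{supp(w) ⊆_e Q} L_Q. -/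
open Finset
open scoped Classical

/-- Noncommutative polynomials in `c`, `d` over `ℚ` (`false` = `c`, degree 1;
`true` = `d`, degree 2). -/
abbrev CDRing : Type := MonoidAlgebra ℚ (FreeMonoid Bool)

/-- Noncommutative polynomials in `c`, `e` over `ℚ` (`false` = `c`,
`true` = `e`). -/
abbrev CERing : Type := MonoidAlgebra ℚ (FreeMonoid Bool)

/-- Number of `d`'s in a cd-word. -/
def dCount (w : List Bool) : ℕ := w.count true

/-- The set of positions (starting at `p`) occupied by the `d`'s of a cd-word;
each `d` occupies two consecutive positions. -/
def dSupp : List Bool → ℕ → Finset ℕ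
  | [], _ => ∅
  | false :: t, p => dSupp t (p + 1)
  | true :: t, p => {p, p + 1} ∪ dSupp t (p + 2)

/-- The image of a cd-word in `ℚ⟨c,e⟩` under `c ↦ c`, `d ↦ (cc − ee)/2`. -/
noncomputable def cdWordToCE : List Bool → CERing
  | [] => 1
  | false :: t => MonoidAlgebra.single (FreeMonoid.ofList [false]) 1 * cdWordToCE t
  | true :: t =>
      ((2 : ℚ)⁻¹ • (MonoidAlgebra.single (FreeMonoid.ofList [false, false]) (1 : ℚ)
        - MonoidAlgebra.single (FreeMonoid.ofList [true, true]) (1 : ℚ))) *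
        cdWordToCE t

/-- The linear extension of `cdWordToCE` to `ℚ⟨c,d⟩`: the substitution
`c ↦ c`, `d ↦ (cc − ee)/2`. -/
noncomputable def ceMap (Φ : CDRing) : CERing :=
  Φ.coeff.sum fun w a => a • cdWordToCE (FreeMonoid.toList w)

/-- The ce-word `v_Q` of length `n` (`e`'s exactly at the positions of
`Q ⊆ [1,n]`). -/
noncomputable def ceWord (n : ℕ) (Q : Finset ℕ) : CERing :=
  MonoidAlgebra.single
    (FreeMonoid.ofList ((List.range n).map fun i => decide ((i + 1) ∈ Q))) 1

/-- A finset of naturals is an interval if it is `Finset.Icc a b`. -/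
def IsInterval (J : Finset ℕ) : Prop := ∃ a b : ℕ, J = Finset.Icc a b

/-- An even set: a disjoint union of intervals, each of even cardinality. -/
def IsEvenSet (Q : Finset ℕ) : Prop :=
  ∃ 𝒥 : Finset (Finset ℕ), (∀ J ∈ 𝒥, IsInterval J ∧ Even J.card) ∧
    (𝒥 : Set (Finset ℕ)).PairwiseDisjoint id ∧ Q = 𝒥.sup id

/-- `Q` evenly contains `S`, written `S ⊆ₑ Q`. -/
def EvenlyContains (S Q : Finset ℕ) : Prop :=
  IsEvenSet S ∧ IsEvenSet Q ∧ S ⊆ Q ∧ IsEvenSet (Q \ S)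

-- auxiliary
noncomputable def dcWord : List Bool → CDRing
  | [] => 1
  | false :: t => MonoidAlgebra.single (FreeMonoid.ofList [false]) 1 * dcWord t
  | true :: true :: t =>
      (MonoidAlgebra.single (FreeMonoid.ofList [false, false]) (1 : ℚ)
        - MonoidAlgebra.single (FreeMonoid.ofList [true]) (2 : ℚ)) * dcWord t
  | [true] => 0
  | true :: false :: _ => 0

noncomputable def dcT : CERing →ₗ[ℚ] CDRing :=
  (Finsupp.lsum ℚ fun u => LinearMap.toSpanSingleton ℚ CDRing (dcWord (FreeMonoid.toList u))) ∘ₗ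
    (MonoidAlgebra.coeffLinearEquiv ℚ).toLinearMap

lemma dcT_single (u : FreeMonoid Bool) (a : ℚ) :
    dcT (MonoidAlgebra.single u a) = a • dcWord (FreeMonoid.toList u) := by
  rw [dcT]
  exact (Finsupp.lsum_single (S := ℚ) _ _ _).trans (LinearMap.toSpanSingleton_apply _ _ _ _)

lemma dcT_mul_step (l : List Bool) (D : CDRing)
    (h : ∀ t : List Bool, dcWord (l ++ t) = D * dcWord t) (X : CERing) :
    dcT (MonoidAlgebra.single (FreeMonoid.ofList l) 1 * X) = D * dcT X := by
  induction X using MonoidAlgebra.induction_linear with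
  | zero => simp
  | add f g hf hg =>
      rw [mul_add, map_add, hf, hg, map_add, mul_add]
  | single u b =>
      rw [MonoidAlgebra.single_mul_single, one_mul, dcT_single, dcT_single,
        show FreeMonoid.toList (FreeMonoid.ofList l * u) = l ++ FreeMonoid.toList u from rfl,
        h, mul_smul_comm]

lemma dcT_cdWordToCE (l : List Bool) :
    dcT (cdWordToCE l) = MonoidAlgebra.single (FreeMonoid.ofList l) 1 := by
  induction l with
  | nil =>
      rw [show cdWordToCE [] = 1 from rfl, MonoidAlgebra.one_def, dcT_single]
      simp [dcWord, MonoidAlgebra.one_def]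
  | cons b t ih =>
      cases b with
      | false =>
          rw [show cdWordToCE (false :: t)
              = MonoidAlgebra.single (FreeMonoid.ofList [false]) 1 * cdWordToCE t from rfl,
            dcT_mul_step [false] (MonoidAlgebra.single (FreeMonoid.ofList [false]) 1)
              (fun t => rfl), ih, MonoidAlgebra.single_mul_single, one_mul]
          rfl
      | true =>
          rw [show cdWordToCE (true :: t)
              = ((2 : ℚ)⁻¹ • (MonoidAlgebra.single (FreeMonoid.ofList [false, false]) (1 : ℚ)
                - MonoidAlgebra.single (FreeMonoid.ofList [true, true]) (1 : ℚ))) *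
                cdWordToCE t from rfl,
            smul_mul_assoc, sub_mul, map_smul, map_sub,
            dcT_mul_step [false, false]
              (MonoidAlgebra.single (FreeMonoid.ofList [false, false]) 1)
              (fun t => by
                rw [show ([false, false] ++ t : List Bool) = false :: false :: t from rfl,
                  show dcWord (false :: false :: t)
                    = MonoidAlgebra.single (FreeMonoid.ofList [false]) 1 *
                      (MonoidAlgebra.single (FreeMonoid.ofList [false]) 1 * dcWord t) from rfl,
                  ← mul_assoc, MonoidAlgebra.single_mul_single, one_mul]
                rfl),
            dcT_mul_step [true, true]
              (MonoidAlgebra.single (FreeMonoid.ofList [false, false]) (1 : ℚ)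
                - MonoidAlgebra.single (FreeMonoid.ofList [true]) (2 : ℚ))
              (fun t => rfl), ih]
          rw [sub_mul, sub_sub_cancel, MonoidAlgebra.single_mul_single, MonoidAlgebra.smul_single']
          norm_num

lemma ceMap_single (u : FreeMonoid Bool) (a : ℚ) :
    ceMap (MonoidAlgebra.single u a) = a • cdWordToCE (FreeMonoid.toList u) :=
  Finsupp.sum_single_index (zero_smul _ _)

lemma claimA (Φ : CDRing) : dcT (ceMap Φ) = Φ := by
  induction Φ using MonoidAlgebra.induction_linear with
  | zero =>
      rw [show ceMap 0 = 0 from Finsupp.sum_zero_index, map_zero]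
  | add f g hf hg =>
      rw [show ceMap (f + g) = ceMap f + ceMap g from
        Finsupp.sum_add_index' (fun _ => zero_smul _ _) (fun _ a b => add_smul a b _),
        map_add, hf, hg]
  | single u b =>
      rw [ceMap_single, map_smul, dcT_cdWordToCE, FreeMonoid.ofList_toList]
      rw [MonoidAlgebra.smul_single', mul_one]

def matchW : List Bool → List Bool → Bool
  | [], [] => true
  | [], _ :: _ => false
  | _ :: _, [] => false
  | false :: u, false :: w => matchW u w
  | false :: _, true :: _ => false
  | true :: true :: u, true :: w => matchW u w
  | true :: true :: u, false :: false :: w => matchW u w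
  | true :: true :: _, [false] => false
  | true :: true :: _, false :: true :: _ => false
  | [true], _ :: _ => false
  | true :: false :: _, _ :: _ => false

lemma single_mul_apply_prefix (l t : List Bool) (r : ℚ) (f : CERing) :
    (MonoidAlgebra.single (FreeMonoid.ofList l) r * f).coeff (FreeMonoid.ofList (l ++ t))
      = r * f.coeff (FreeMonoid.ofList t) :=
  MonoidAlgebra.coeff_single_mul_eq_mul_coeff (FreeMonoid.ofList t) fun a _ => by
    rw [FreeMonoid.ofList_append]; exact mul_right_inj _

lemma single_mul_apply_nonprefix (l w : List Bool) (h : ∀ t : List Bool, w ≠ l ++ t)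
    (r : ℚ) (f : CERing) :
    (MonoidAlgebra.single (FreeMonoid.ofList l) r * f).coeff (FreeMonoid.ofList w) = 0 :=
  MonoidAlgebra.single_mul_apply_of_not_exists_mul r f (by
    rintro ⟨d, hd⟩
    exact h (FreeMonoid.toList d) (congrArg FreeMonoid.toList hd))

lemma dCount_cons_true (w : List Bool) : dCount (true :: w) = dCount w + 1 := by
  simp [dCount, List.count_cons]

lemma dCount_cons_false (w : List Bool) : dCount (false :: w) = dCount w := by
  simp [dCount, List.count_cons]

lemma coeff_dcWord (u w : List Bool) :
    (dcWord u).coeff (FreeMonoid.ofList w)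
      = if matchW u w then (-2 : ℚ) ^ (dCount w) else 0 :=
  match u, w with
  | [], [] => by
      rw [show dcWord [] = 1 from rfl, MonoidAlgebra.one_def]
      simp [matchW, dCount, Finsupp.single_apply]
  | [], b :: w => by
      rw [show dcWord [] = 1 from rfl, MonoidAlgebra.one_def]
      have h1 : (1 : FreeMonoid Bool) ≠ FreeMonoid.ofList (b :: w) := by
        intro h
        exact (List.cons_ne_nil b w) (congrArg FreeMonoid.toList h).symm
      rw [MonoidAlgebra.coeff_single,
        Finsupp.single_eq_of_ne' h1]
      simp [matchW]
  | false :: u, [] => by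
      rw [show dcWord (false :: u)
          = MonoidAlgebra.single (FreeMonoid.ofList [false]) 1 * dcWord u from rfl,
        single_mul_apply_nonprefix [false] [] (by simp)]
      simp [matchW]
  | false :: u, false :: w => by
      rw [show dcWord (false :: u)
          = MonoidAlgebra.single (FreeMonoid.ofList [false]) 1 * dcWord u from rfl,
        show (false :: w) = [false] ++ w from rfl,
        single_mul_apply_prefix, coeff_dcWord u w, one_mul,
        show matchW (false :: u) ([false] ++ w) = matchW u w from rfl,
        show dCount ([false] ++ w) = dCount w from dCount_cons_false w]
  | false :: u, true :: w => by
      rw [show dcWord (false :: u)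
          = MonoidAlgebra.single (FreeMonoid.ofList [false]) 1 * dcWord u from rfl,
        single_mul_apply_nonprefix [false] (true :: w) (by simp)]
      simp [matchW]
  | [true], w => by
      rw [show dcWord [true] = 0 from rfl]
      cases w with
      | nil => simp [matchW]
      | cons b w => simp [matchW]
  | true :: false :: u, w => by
      rw [show dcWord (true :: false :: u) = 0 from rfl]
      cases w with
      | nil => simp [matchW]
      | cons b w => simp [matchW]
  | true :: true :: u, w => by
      rw [show dcWord (true :: true :: u)
          = (MonoidAlgebra.single (FreeMonoid.ofList [false, false]) (1 : ℚ)
            - MonoidAlgebra.single (FreeMonoid.ofList [true]) (2 : ℚ)) * dcWord u from rfl,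
        sub_mul, MonoidAlgebra.coeff_sub, Finsupp.sub_apply]
      cases w with
      | nil =>
          rw [single_mul_apply_nonprefix [false, false] [] (by simp),
            single_mul_apply_nonprefix [true] [] (by simp)]
          simp [matchW]
      | cons b w =>
          cases b with
          | true =>
              rw [single_mul_apply_nonprefix [false, false] (true :: w) (by simp),
                show (true :: w) = [true] ++ w from rfl,
                single_mul_apply_prefix, coeff_dcWord u w,
                show matchW (true :: true :: u) ([true] ++ w) = matchW u w from rfl,
                show dCount ([true] ++ w) = dCount w + 1 from dCount_cons_true w]
              split_ifs with h
              · rw [pow_succ]; ring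
              · simp
          | false =>
              cases w with
              | nil =>
                  rw [single_mul_apply_nonprefix [false, false] [false] (by simp),
                    single_mul_apply_nonprefix [true] [false] (by simp)]
                  simp [matchW]
              | cons b2 w2 =>
                  cases b2 with
                  | true =>
                      rw [single_mul_apply_nonprefix [false, false]
                          (false :: true :: w2) (by simp),
                        single_mul_apply_nonprefix [true] (false :: true :: w2) (by simp)]
                      simp [matchW]
                  | false =>
                      rw [single_mul_apply_nonprefix [true] (false :: false :: w2) (by simp),
                        show (false :: false :: w2) = [false, false] ++ w2 from rfl,
                        single_mul_apply_prefix, coeff_dcWord u w2, one_mul,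
                        show matchW (true :: true :: u) ([false, false] ++ w2)
                          = matchW u w2 from rfl,
                        sub_zero, show dCount ([false, false] ++ w2) = dCount w2 from rfl]

def trueSet : List Bool → ℕ → Finset ℕ
  | [], _ => ∅
  | false :: t, p => trueSet t (p + 1)
  | true :: t, p => insert p (trueSet t (p + 1))

def evenCond (Q : Finset ℕ) : Prop := ∀ q, q ∉ Q → Even ((Q ∩ Finset.Iio q).card)

lemma le_of_mem_trueSet : ∀ (u : List Bool) (p x : ℕ), x ∈ trueSet u p → p ≤ x := by
  intro u
  induction u with
  | nil => intro p x h; simp [trueSet] at h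
  | cons b t ih =>
      intro p x h
      cases b with
      | false => exact le_trans (Nat.le_succ p) (ih (p + 1) x h)
      | true =>
          rcases Finset.mem_insert.mp h with h | h
          · omega
          · exact le_trans (Nat.le_succ p) (ih (p + 1) x h)

lemma le_of_mem_dSupp : ∀ (w : List Bool) (p x : ℕ), x ∈ dSupp w p → p ≤ x := by
  intro w
  induction w with
  | nil => intro p x h; simp [dSupp] at h
  | cons b t ih =>
      intro p x h
      cases b with
      | false => exact le_trans (Nat.le_succ p) (ih (p + 1) x h)
      | true =>
          rcases Finset.mem_union.mp h with h | h
          · rcases Finset.mem_insert.mp h with h | h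
            · omega
            · rw [Finset.mem_singleton] at h; omega
          · have := ih (p + 2) x h; omega

lemma evenCond_empty : evenCond ∅ := by
  intro q _
  simp

lemma pair_union_inter_Iio {Q : Finset ℕ} {p q : ℕ} (hQ : ∀ x ∈ Q, p + 2 ≤ x)
    (hq : p + 2 ≤ q) :
    ({p, p + 1} ∪ Q) ∩ Finset.Iio q = {p, p + 1} ∪ (Q ∩ Finset.Iio q) := by
  ext x
  simp only [Finset.mem_inter, Finset.mem_union, Finset.mem_insert, Finset.mem_singleton,
    Finset.mem_Iio]
  constructor
  · rintro ⟨(h1 | h1) | h1, h2⟩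
    · left; left; exact h1
    · left; right; exact h1
    · right; exact ⟨h1, h2⟩
  · rintro ((h1 | h1) | ⟨h1, h2⟩)
    · exact ⟨Or.inl (Or.inl h1), by omega⟩
    · exact ⟨Or.inl (Or.inr h1), by omega⟩
    · exact ⟨Or.inr h1, h2⟩

lemma card_pair_union {Q : Finset ℕ} {p : ℕ} (hQ : ∀ x ∈ Q, p + 2 ≤ x) :
    ({p, p + 1} ∪ Q).card = 2 + Q.card := by
  rw [Finset.card_union_of_disjoint]
  · rw [Finset.card_insert_of_notMem (by simp), Finset.card_singleton]
  · rw [Finset.disjoint_left]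
    intro x hx hx'
    have := hQ x hx'
    rcases Finset.mem_insert.mp hx with h | h
    · omega
    · rw [Finset.mem_singleton] at h; omega

lemma evenCond_pair_union {Q : Finset ℕ} {p : ℕ} (hQ : ∀ x ∈ Q, p + 2 ≤ x) :
    evenCond ({p, p + 1} ∪ Q) ↔ evenCond Q := by
  constructor
  · intro h q hq
    by_cases hc : q < p + 2
    · have he : Q ∩ Finset.Iio q = ∅ := by
        ext x
        simp only [Finset.mem_inter, Finset.mem_Iio, Finset.notMem_empty, iff_false, not_and]
        intro hx
        have := hQ x hx; omega
      rw [he]; simp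
    · push_neg at hc
      have hq' : q ∉ ({p, p + 1} ∪ Q) := by
        simp only [Finset.mem_union, Finset.mem_insert, Finset.mem_singleton]
        push_neg
        exact ⟨⟨by omega, by omega⟩, hq⟩
      have := h q hq'
      rw [pair_union_inter_Iio hQ hc,
        card_pair_union (fun x hx => hQ x (Finset.mem_inter.mp hx).1)] at this
      rcases this with ⟨k, hk⟩
      exact ⟨k - 1, by omega⟩
  · intro h q hq
    simp only [Finset.mem_union, Finset.mem_insert, Finset.mem_singleton] at hq
    push_neg at hq
    obtain ⟨⟨hq1, hq2⟩, hq3⟩ := hq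
    by_cases hc : q < p + 2
    · have he : ({p, p + 1} ∪ Q) ∩ Finset.Iio q = ∅ := by
        ext x
        simp only [Finset.mem_inter, Finset.mem_union, Finset.mem_insert, Finset.mem_singleton,
          Finset.mem_Iio, Finset.notMem_empty, iff_false, not_and]
        rintro ((h1 | h1) | h1) h2
        · omega
        · omega
        · have := hQ x h1; omega
      rw [he]; simp
    · push_neg at hc
      rw [pair_union_inter_Iio hQ hc,
        card_pair_union (fun x hx => hQ x (Finset.mem_inter.mp hx).1)]
      rcases h q hq3 with ⟨k, hk⟩
      exact ⟨k + 1, by omega⟩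

lemma evenCond_dSupp : ∀ (w : List Bool) (p : ℕ), evenCond (dSupp w p) := by
  intro w
  induction w with
  | nil => intro p; exact evenCond_empty
  | cons b t ih =>
      intro p
      cases b with
      | false => exact ih (p + 1)
      | true =>
          exact (evenCond_pair_union (fun x hx => le_of_mem_dSupp t (p + 2) x hx)).mpr
            (ih (p + 2))

lemma succ_mem_of_evenCond {Q : Finset ℕ} {p : ℕ} (h : evenCond Q)
    (hbound : ∀ x ∈ Q, p ≤ x) (hp : p ∈ Q) : p + 1 ∈ Q := by
  by_contra hnot
  have h1 := h (p + 1) hnot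
  have h2 : Q ∩ Finset.Iio (p + 1) = {p} := by
    ext x
    simp only [Finset.mem_inter, Finset.mem_Iio, Finset.mem_singleton]
    constructor
    · rintro ⟨hx, hlt⟩
      have := hbound x hx; omega
    · rintro rfl
      exact ⟨hp, by omega⟩
  rw [h2, Finset.card_singleton] at h1
  rcases h1 with ⟨k, hk⟩
  omega

lemma cdDeg_cons (b : Bool) (w : List Bool) :
    cdDeg (b :: w) = (if b then 2 else 1) + cdDeg w := by
  simp [cdDeg]

lemma trueSet_tt (u : List Bool) (p : ℕ) :
    trueSet (true :: true :: u) p = {p, p + 1} ∪ trueSet u (p + 2) := by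
  ext x
  simp only [Finset.mem_union, Finset.mem_insert, Finset.mem_singleton,
    show trueSet (true :: true :: u) p
      = insert p (insert (p + 1) (trueSet u (p + 2))) from rfl]
  tauto

lemma master : ∀ (u w : List Bool) (p : ℕ), u.length = cdDeg w →
    (matchW u w = true ↔
      (dSupp w p ⊆ trueSet u p ∧ evenCond (trueSet u p) ∧
        evenCond (trueSet u p \ dSupp w p)))
  | [], [], p, _ => by
      simp [matchW, trueSet, dSupp, evenCond_empty]
  | [], b :: w, p, h => by
      exfalso; rw [cdDeg_cons] at h; revert h; cases b <;> simp <;> omega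
  | b :: u, [], p, h => by
      exfalso; simp [cdDeg] at h
  | false :: u, false :: w, p, h => by
      have hlen : u.length = cdDeg w := by
        rw [cdDeg_cons] at h; simp at h; omega
      exact master u w (p + 1) hlen
  | false :: u, true :: w, p, h => by
      rw [show matchW (false :: u) (true :: w) = false from rfl]
      simp only [Bool.false_eq_true, false_iff]
      rintro ⟨hsub, -, -⟩
      have hp : p ∈ dSupp (true :: w) p := by
        rw [show dSupp (true :: w) p = {p, p + 1} ∪ dSupp w (p + 2) from rfl]
        exact Finset.mem_union_left _ (Finset.mem_insert_self _ _)
      have := le_of_mem_trueSet u (p + 1) p (hsub hp)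
      omega
  | [true], b :: w, p, h => by
      rw [show matchW [true] (b :: w) = false by
        rcases b with _ | _ <;> rcases w with _ | ⟨_ | _, _⟩ <;> rfl]
      simp only [Bool.false_eq_true, false_iff]
      rintro ⟨-, hQ, -⟩
      have hp : p ∈ trueSet [true] p := Finset.mem_insert_self _ _
      have hbound : ∀ x ∈ trueSet [true] p, p ≤ x := le_of_mem_trueSet _ _
      have h1 := succ_mem_of_evenCond hQ hbound hp
      rw [show trueSet [true] p = {p} from rfl, Finset.mem_singleton] at h1
      omega
  | true :: false :: u, b :: w, p, h => by
      rw [show matchW (true :: false :: u) (b :: w) = false by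
        rcases b with _ | _ <;> rcases w with _ | ⟨_ | _, _⟩ <;> rfl]
      simp only [Bool.false_eq_true, false_iff]
      rintro ⟨-, hQ, -⟩
      have hp : p ∈ trueSet (true :: false :: u) p := Finset.mem_insert_self _ _
      have hbound := le_of_mem_trueSet (true :: false :: u) p
      have h1 := succ_mem_of_evenCond hQ hbound hp
      rw [show trueSet (true :: false :: u) p = insert p (trueSet u (p + 2)) from rfl] at h1
      rcases Finset.mem_insert.mp h1 with h2 | h2
      · omega
      · have := le_of_mem_trueSet u (p + 2) _ h2; omega
  | true :: true :: u, true :: w, p, h => by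
      have hlen : u.length = cdDeg w := by
        rw [cdDeg_cons] at h; simp at h; omega
      have hQ' : ∀ x ∈ trueSet u (p + 2), p + 2 ≤ x := le_of_mem_trueSet u (p + 2)
      have hS' : ∀ x ∈ dSupp w (p + 2), p + 2 ≤ x := le_of_mem_dSupp w (p + 2)
      have f2 : trueSet (true :: true :: u) p = {p, p + 1} ∪ trueSet u (p + 2) :=
        trueSet_tt u p
      have f1 : dSupp (true :: w) p = {p, p + 1} ∪ dSupp w (p + 2) := rfl
      have f3 : ({p, p + 1} ∪ dSupp w (p + 2)) ⊆ ({p, p + 1} ∪ trueSet u (p + 2)) ↔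
          dSupp w (p + 2) ⊆ trueSet u (p + 2) := by
        constructor
        · intro hh x hx
          have hx2 := hS' x hx
          have := hh (Finset.mem_union_right _ hx)
          rcases Finset.mem_union.mp this with h1 | h1
          · rcases Finset.mem_insert.mp h1 with h1 | h1
            · omega
            · rw [Finset.mem_singleton] at h1; omega
          · exact h1
        · exact fun hh => Finset.union_subset_union_right hh
      have f4 : ({p, p + 1} ∪ trueSet u (p + 2)) \ ({p, p + 1} ∪ dSupp w (p + 2))
          = trueSet u (p + 2) \ dSupp w (p + 2) := by
        ext x
        simp only [Finset.mem_sdiff, Finset.mem_union, Finset.mem_insert,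
          Finset.mem_singleton]
        constructor
        · rintro ⟨(h1 | h1) | h1, h2⟩
          · exact absurd (Or.inl (Or.inl h1)) h2
          · exact absurd (Or.inl (Or.inr h1)) h2
          · push_neg at h2
            exact ⟨h1, h2.2⟩
        · rintro ⟨h1, h2⟩
          have := hQ' x h1
          refine ⟨Or.inr h1, ?_⟩
          push_neg
          exact ⟨⟨by omega, by omega⟩, h2⟩
      rw [show matchW (true :: true :: u) (true :: w) = matchW u w from rfl, f1, f2, f4, f3,
        evenCond_pair_union hQ']
      exact master u w (p + 2) hlen
  | true :: true :: u, false :: false :: w, p, h => by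
      have hlen : u.length = cdDeg w := by
        rw [cdDeg_cons, cdDeg_cons] at h; simp at h; omega
      have hQ' : ∀ x ∈ trueSet u (p + 2), p + 2 ≤ x := le_of_mem_trueSet u (p + 2)
      have hS' : ∀ x ∈ dSupp w (p + 2), p + 2 ≤ x := le_of_mem_dSupp w (p + 2)
      have f2 := trueSet_tt u p
      have f1 : dSupp (false :: false :: w) p = dSupp w (p + 2) := rfl
      have g3 : dSupp w (p + 2) ⊆ ({p, p + 1} ∪ trueSet u (p + 2)) ↔
          dSupp w (p + 2) ⊆ trueSet u (p + 2) := by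
        constructor
        · intro hh x hx
          have hx2 := hS' x hx
          rcases Finset.mem_union.mp (hh hx) with h1 | h1
          · rcases Finset.mem_insert.mp h1 with h1 | h1
            · omega
            · rw [Finset.mem_singleton] at h1; omega
          · exact h1
        · intro hh; exact hh.trans Finset.subset_union_right
      have g4 : ({p, p + 1} ∪ trueSet u (p + 2)) \ dSupp w (p + 2)
          = {p, p + 1} ∪ (trueSet u (p + 2) \ dSupp w (p + 2)) := by
        ext x
        simp only [Finset.mem_sdiff, Finset.mem_union, Finset.mem_insert,
          Finset.mem_singleton]
        constructor
        · rintro ⟨(h1 | h1) | h1, h2⟩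
          · left; left; exact h1
          · left; right; exact h1
          · right; exact ⟨h1, h2⟩
        · rintro ((h1 | h1) | ⟨h1, h2⟩)
          · refine ⟨Or.inl (Or.inl h1), fun hx => ?_⟩
            have := hS' x hx; omega
          · refine ⟨Or.inl (Or.inr h1), fun hx => ?_⟩
            have := hS' x hx; omega
          · exact ⟨Or.inr h1, h2⟩
      have hQS' : ∀ x ∈ trueSet u (p + 2) \ dSupp w (p + 2), p + 2 ≤ x := fun x hx =>
        hQ' x (Finset.mem_sdiff.mp hx).1
      rw [show matchW (true :: true :: u) (false :: false :: w) = matchW u w from rfl,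
        f1, f2, g4, g3, evenCond_pair_union hQ', evenCond_pair_union hQS']
      exact master u w (p + 2) hlen
  | true :: true :: u, [false], p, h => by
      exfalso
      rw [cdDeg_cons] at h
      simp [cdDeg] at h
  | true :: true :: u, false :: true :: w, p, h => by
      rw [show matchW (true :: true :: u) (false :: true :: w) = false from rfl]
      simp only [Bool.false_eq_true, false_iff]
      rintro ⟨hsub, hQ, hQS⟩
      have hp : p ∈ trueSet (true :: true :: u) p := Finset.mem_insert_self _ _
      have hpS : p ∉ dSupp (false :: true :: w) p := by
        intro hx
        have := le_of_mem_dSupp (true :: w) (p + 1) p hx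
        omega
      have hp1S : p + 1 ∈ dSupp (false :: true :: w) p := by
        rw [show dSupp (false :: true :: w) p
            = {p + 1, p + 1 + 1} ∪ dSupp w (p + 1 + 2) from rfl]
        exact Finset.mem_union_left _ (Finset.mem_insert_self _ _)
      have hpd : p ∈ trueSet (true :: true :: u) p \ dSupp (false :: true :: w) p :=
        Finset.mem_sdiff.mpr ⟨hp, hpS⟩
      have hbound : ∀ x ∈ trueSet (true :: true :: u) p \ dSupp (false :: true :: w) p,
          p ≤ x := fun x hx => le_of_mem_trueSet _ _ x (Finset.mem_sdiff.mp hx).1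
      have hstep := succ_mem_of_evenCond hQS hbound hpd
      exact (Finset.mem_sdiff.mp hstep).2 hp1S

lemma isEvenSet_to_evenCond {Q : Finset ℕ} (h : IsEvenSet Q) : evenCond Q := by
  obtain ⟨J, hJ, hdisj, rfl⟩ := h
  intro q hq
  classical
  rw [Finset.sup_eq_biUnion] at hq ⊢
  have hinter : (J.biUnion id) ∩ Finset.Iio q = J.biUnion fun K => K ∩ Finset.Iio q := by
    ext x
    simp only [Finset.mem_inter, Finset.mem_biUnion, id]
    tauto
  rw [hinter, Finset.card_biUnion]
  · apply Finset.sum_induction _ Even (fun a b => Even.add) Even.zero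
    intro K hK
    obtain ⟨⟨a, b, rfl⟩, heven⟩ := hJ K hK
    have hqK : q ∉ Finset.Icc a b := by
      intro hqK
      exact hq (Finset.mem_biUnion.mpr ⟨_, hK, hqK⟩)
    rw [Finset.mem_Icc] at hqK
    push_neg at hqK
    by_cases hcase : q ≤ a
    · have : Finset.Icc a b ∩ Finset.Iio q = ∅ := by
        ext x
        simp only [Finset.mem_inter, Finset.mem_Icc, Finset.mem_Iio, Finset.notMem_empty,
          iff_false, not_and]
        intro hx; omega
      rw [this]; simp
    · push_neg at hcase
      have hbq : b < q := hqK (by omega)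
      have : Finset.Icc a b ∩ Finset.Iio q = Finset.Icc a b := by
        apply Finset.inter_eq_left.mpr
        intro x hx
        rw [Finset.mem_Icc] at hx
        rw [Finset.mem_Iio]
        omega
      rw [this]; exact heven
  · intro a ha b hb hab
    exact Disjoint.mono (Finset.inter_subset_left) (Finset.inter_subset_left)
      (hdisj ha hb hab)

lemma evenCond_to_isEvenSet : ∀ (k : ℕ) (Q : Finset ℕ), Q.card = k → evenCond Q →
    IsEvenSet Q := by
  intro k
  induction k using Nat.strong_induction_on with
  | _ k ih =>
      intro Q hcard h
      by_cases hQ : Q = ∅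
      · subst hQ
        exact ⟨∅, by simp, by simp, by simp⟩
      · have hne : Q.Nonempty := Finset.nonempty_of_ne_empty hQ
        set m := Q.min' hne with hm
        have hmQ : m ∈ Q := Q.min'_mem hne
        have hbound : ∀ x ∈ Q, m ≤ x := fun x hx => Q.min'_le x hx
        have hm1Q : m + 1 ∈ Q := succ_mem_of_evenCond h hbound hmQ
        set Q' := Q \ {m, m + 1} with hQ'
        have hmem' : ∀ x, x ∈ Q' ↔ x ∈ Q ∧ x ≠ m ∧ x ≠ m + 1 := by
          intro x
          simp only [hQ', Finset.mem_sdiff, Finset.mem_insert, Finset.mem_singleton]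
          tauto
        have hsub : ({m, m + 1} : Finset ℕ) ⊆ Q := by
          intro x hx
          rcases Finset.mem_insert.mp hx with h1 | h1
          · subst h1; exact hmQ
          · rw [Finset.mem_singleton] at h1; subst h1; exact hm1Q
        have hcard' : Q'.card = k - 2 := by
          rw [hQ', Finset.card_sdiff_of_subset hsub, hcard,
            Finset.card_insert_of_notMem (by simp), Finset.card_singleton]
        have hk2 : 2 ≤ k := by
          have := Finset.card_le_card hsub
          rw [hcard] at this
          rw [Finset.card_insert_of_notMem (by simp), Finset.card_singleton] at this
          omega
        have hcond' : evenCond Q' := by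
          intro q hq
          by_cases hqm : q < m
          · have he : Q' ∩ Finset.Iio q = ∅ := by
              ext x
              simp only [Finset.mem_inter, Finset.mem_Iio, Finset.notMem_empty, iff_false,
                not_and]
              intro hx
              have := hbound x ((hmem' x).mp hx).1
              omega
            rw [he]; simp
          · by_cases hqm1 : q ≤ m + 1
            · have he : Q' ∩ Finset.Iio q = ∅ := by
                ext x
                simp only [Finset.mem_inter, Finset.mem_Iio, Finset.notMem_empty, iff_false,
                  not_and]
                intro hx
                obtain ⟨hx1, hx2, hx3⟩ := (hmem' x).mp hx
                have := hbound x hx1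
                omega
              rw [he]; simp
            · push_neg at hqm hqm1
              have hqQ : q ∉ Q := by
                intro hqQ
                exact hq ((hmem' q).mpr ⟨hqQ, by omega, by omega⟩)
              have he : Q' ∩ Finset.Iio q = (Q ∩ Finset.Iio q) \ {m, m + 1} := by
                ext x
                simp only [Finset.mem_inter, Finset.mem_Iio, Finset.mem_sdiff,
                  Finset.mem_insert, Finset.mem_singleton, hmem' x]
                tauto
              have hsub2 : ({m, m + 1} : Finset ℕ) ⊆ Q ∩ Finset.Iio q := by
                intro x hx
                rcases Finset.mem_insert.mp hx with h1 | h1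
                · subst h1; exact Finset.mem_inter.mpr ⟨hmQ, Finset.mem_Iio.mpr (by omega)⟩
                · rw [Finset.mem_singleton] at h1; subst h1
                  exact Finset.mem_inter.mpr ⟨hm1Q, Finset.mem_Iio.mpr (by omega)⟩
              rw [he, Finset.card_sdiff_of_subset hsub2,
                Finset.card_insert_of_notMem (by simp), Finset.card_singleton]
              have hge := Finset.card_le_card hsub2
              rw [Finset.card_insert_of_notMem (by simp), Finset.card_singleton] at hge
              rcases h q hqQ with ⟨r, hr⟩
              exact ⟨r - 1, by omega⟩
        obtain ⟨J', hJ1, hJ2, hJ3⟩ := ih (k - 2) (by omega) Q' hcard' hcond'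
        refine ⟨insert (Finset.Icc m (m + 1)) J', ?_, ?_, ?_⟩
        · intro K hK
          rcases Finset.mem_insert.mp hK with h1 | h1
          · subst h1
            refine ⟨⟨m, m + 1, rfl⟩, ?_⟩
            rw [Nat.card_Icc]
            exact ⟨1, by omega⟩
          · exact hJ1 K h1
        · rw [Finset.coe_insert]
          apply Set.PairwiseDisjoint.insert hJ2
          intro K hK _
          rw [Finset.disjoint_left]
          intro x hx hxK
          have hxQ' : x ∈ Q' := by
            rw [hJ3]
            exact (Finset.le_sup (f := id) hK : K ≤ J'.sup id) hxK
          obtain ⟨-, hx2, hx3⟩ := (hmem' x).mp hxQ'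
          rw [show (Finset.Icc m (m + 1)) = {m, m + 1} from by
            ext y; simp [Finset.mem_Icc]; omega] at hx
          rcases Finset.mem_insert.mp hx with h1 | h1
          · exact hx2 h1
          · rw [Finset.mem_singleton] at h1; exact hx3 h1
        · rw [Finset.sup_insert, ← hJ3]
          ext x
          simp only [Finset.sup_eq_union, id, Finset.mem_union, Finset.mem_Icc, hmem' x]
          constructor
          · intro hx
            by_cases hxm : x = m ∨ x = m + 1
            · left; omega
            · push_neg at hxm
              right; exact ⟨hx, hxm.1, hxm.2⟩
          · rintro (h1 | ⟨h1, -⟩)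
            · have hx : x = m ∨ x = m + 1 := by omega
              rcases hx with rfl | rfl
              · exact hmQ
              · exact hm1Q
            · exact h1

lemma isEvenSet_iff_evenCond (Q : Finset ℕ) : IsEvenSet Q ↔ evenCond Q :=
  ⟨isEvenSet_to_evenCond, fun h => evenCond_to_isEvenSet Q.card Q rfl h⟩

def ceList (n : ℕ) (Q : Finset ℕ) : List Bool :=
  (List.range n).map fun i => decide ((i + 1) ∈ Q)

lemma mem_trueSet : ∀ (u : List Bool) (p x : ℕ),
    x ∈ trueSet u p ↔ ∃ i, ∃ _ : i < u.length, u[i] = true ∧ x = p + i := by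
  intro u
  induction u with
  | nil => intro p x; simp [trueSet]
  | cons b t ih =>
      intro p x
      cases b with
      | false =>
          rw [show trueSet (false :: t) p = trueSet t (p + 1) from rfl, ih (p + 1) x]
          constructor
          · rintro ⟨i, hi, hg, rfl⟩
            exact ⟨i + 1, by simp; omega, by simpa using hg, by omega⟩
          · rintro ⟨i, hi, hg, rfl⟩
            match i with
            | 0 => simp at hg
            | j + 1 =>
                refine ⟨j, by simp at hi; omega, by simpa using hg, by omega⟩
      | true =>
          rw [show trueSet (true :: t) p = insert p (trueSet t (p + 1)) from rfl]
          rw [Finset.mem_insert, ih (p + 1) x]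
          constructor
          · rintro (rfl | ⟨i, hi, hg, rfl⟩)
            · exact ⟨0, by simp, by simp, by omega⟩
            · exact ⟨i + 1, by simp; omega, by simpa using hg, by omega⟩
          · rintro ⟨i, hi, hg, rfl⟩
            match i with
            | 0 => left; omega
            | j + 1 =>
                right
                exact ⟨j, by simp at hi; omega, by simpa using hg, by omega⟩

lemma trueSet_ceList {n : ℕ} {Q : Finset ℕ} (hQ : Q ⊆ Finset.Icc 1 n) :
    trueSet (ceList n Q) 1 = Q := by
  ext x
  rw [mem_trueSet]
  constructor
  · rintro ⟨i, hi, hg, rfl⟩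
    simp only [ceList, List.getElem_map, List.getElem_range, decide_eq_true_eq] at hg
    rwa [Nat.add_comm]
  · intro hx
    have hb := Finset.mem_Icc.mp (hQ hx)
    refine ⟨x - 1, ?_, ?_, by omega⟩
    · simp [ceList]; omega
    · simp only [ceList, List.getElem_map, List.getElem_range, decide_eq_true_eq]
      have : x - 1 + 1 = x := by omega
      rw [this]
      exact hx

lemma dSupp_eq_evenCond (w : List Bool) : evenCond (dSupp w 1) := evenCond_dSupp w 1

lemma matchW_iff_evenlyContains {n : ℕ} {Q : Finset ℕ} (hQ : Q ⊆ Finset.Icc 1 n)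
    {w : List Bool} (hw : cdDeg w = n) :
    matchW (ceList n Q) w = true ↔ EvenlyContains (dSupp w 1) Q := by
  rw [master (ceList n Q) w 1 (by simp [ceList, hw]), trueSet_ceList hQ]
  unfold EvenlyContains
  rw [isEvenSet_iff_evenCond, isEvenSet_iff_evenCond, isEvenSet_iff_evenCond]
  have hS := evenCond_dSupp w 1
  tauto

/-- (i) A cd-word `w` occurs in the cd-expansion of an Eulerian ce-word `v_Q`
iff `supp(w) ⊆ₑ Q`; its coefficient there is `(−2)^r` (`r` = number of `d`'s in
`w`).  (ii) Consequently, if `Φ` is the cd-index and `(L_Q)` the ce-index of an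
Eulerian poset of rank `n+1` (so `ceMap Φ = ∑_Q L_Q v_Q` with `L_Q = 0` for
non-even `Q`), then `[w]_Φ = (−2)^r ∑_{supp(w) ⊆ₑ Q} L_Q`. -/
theorem cd_coefficient_from_L_vector (n : ℕ) :
    (∀ Q : Finset ℕ, Q ⊆ Finset.Icc 1 n → IsEvenSet Q →
      ∀ Ψ : CDRing, (∀ w ∈ Ψ.coeff.support, cdDeg (FreeMonoid.toList w) = n) →
        ceMap Ψ = ceWord n Q →
        ∀ w : List Bool, cdDeg w = n →
          Ψ.coeff (FreeMonoid.ofList w)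
            = if EvenlyContains (dSupp w 1) Q then (-2 : ℚ) ^ dCount w else 0) ∧
    (∀ (L : Finset ℕ → ℚ) (Φ : CDRing),
      (∀ w ∈ Φ.coeff.support, cdDeg (FreeMonoid.toList w) = n) →
      (∀ Q : Finset ℕ, ¬ IsEvenSet Q → L Q = 0) →
      ceMap Φ = ∑ Q ∈ (Finset.Icc 1 n).powerset, L Q • ceWord n Q →
      ∀ w : List Bool, cdDeg w = n →
        Φ.coeff (FreeMonoid.ofList w)
          = (-2 : ℚ) ^ dCount w *
            ∑ Q ∈ (Finset.Icc 1 n).powerset,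
              (if EvenlyContains (dSupp w 1) Q then L Q else 0)) := by
  have key : ∀ Q : Finset ℕ, dcT (ceWord n Q) = dcWord (ceList n Q) := by
    intro Q
    rw [ceWord, dcT_single, one_smul]
    rfl
  constructor
  · intro Q hQsub _hQe Ψ _hdeg hce w hw
    have hΨ : Ψ = dcWord (ceList n Q) := by
      rw [← claimA Ψ, hce, key]
    rw [hΨ, coeff_dcWord]
    simp only [matchW_iff_evenlyContains hQsub hw]
  · intro L Φ _hdeg _hL hce w hw
    have hΦ : Φ = ∑ Q ∈ (Finset.Icc 1 n).powerset, L Q • dcWord (ceList n Q) := by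
      rw [← claimA Φ, hce, map_sum]
      refine Finset.sum_congr rfl fun Q hQ => ?_
      rw [map_smul, key]
    rw [hΦ, MonoidAlgebra.coeff_sum, Finsupp.finset_sum_apply, Finset.mul_sum]
    refine Finset.sum_congr rfl fun Q hQ => ?_
    rw [MonoidAlgebra.coeff_smul, Finsupp.smul_apply, smul_eq_mul, coeff_dcWord]
    have hQsub := Finset.mem_powerset.mp hQ
    simp only [matchW_iff_evenlyContains hQsub hw]
    split_ifs with hcond
    · ring
    · ring
end

section
/- For every rank n+1 Eulerian poset P and every T ⊆ V ⊆ [1,n] such that every maximal interval of V contains at most one element of T, the inequality (−1)^{|T|} Σ_{T⊆Q⊆V} L_Q(P) ≥ 0 implies: the cd-index coefficient [c d c^{n−3}]_P = (−2) Σ_{{2,3} ⊆_e Q} L_Q(P) = −2 Σ_{{2}⊆Q⊆[2,n]} L_Q(P) ≥ 0, using that L_Q(P) = 0 unless Q is an even set and that Q is even with {2,3} ⊆_e Q iff Q is even with {2} ⊆ Q ⊆ [2,n]. -/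
open Finset
open scoped Classical

lemma evenSet_pair : IsEvenSet ({2, 3} : Finset ℕ) := by
  refine ⟨{Finset.Icc 2 3}, ?_, ?_, ?_⟩
  · intro J hJ
    simp only [mem_singleton] at hJ
    subst hJ
    exact ⟨⟨2, 3, rfl⟩, by decide⟩
  · simp
  · simp only [Finset.sup_singleton, id]
    decide

lemma even_succ_mem {Q : Finset ℕ} (hQ : IsEvenSet Q) {x : ℕ}
    (hx : x ∈ Q) (hlb : ∀ y ∈ Q, x ≤ y) : x + 1 ∈ Q := by
  obtain ⟨𝒥, hmem, hdisj, hsup⟩ := hQ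
  have hx' : x ∈ 𝒥.sup id := by rwa [← hsup]
  rw [Finset.mem_sup] at hx'
  obtain ⟨J, hJ, hxJ⟩ := hx'
  obtain ⟨⟨a, b, rfl⟩, heven⟩ := hmem J hJ
  have hsub : Finset.Icc a b ⊆ Q := by
    rw [hsup]; exact Finset.le_sup (f := id) hJ
  simp only [id_eq] at hxJ; rw [Finset.mem_Icc] at hxJ
  have hax : a = x := by
    have h1 : x ≤ a := hlb a (hsub (Finset.mem_Icc.mpr ⟨le_refl _, hxJ.1.trans hxJ.2⟩))
    omega
  subst hax
  rw [Nat.card_Icc] at heven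
  obtain ⟨k, hk⟩ := heven
  exact hsub (Finset.mem_Icc.mpr ⟨by omega, by omega⟩)

lemma even_sdiff23 {Q : Finset ℕ} (hQ : IsEvenSet Q) (h2 : 2 ∈ Q)
    (hlb : ∀ y ∈ Q, 2 ≤ y) : IsEvenSet (Q \ {2, 3}) := by
  obtain ⟨𝒥, hmem, hdisj, hsup⟩ := hQ
  have h2' : (2 : ℕ) ∈ 𝒥.sup id := by rwa [← hsup]
  rw [Finset.mem_sup] at h2'
  obtain ⟨J, hJ, h2J⟩ := h2'
  obtain ⟨⟨a, b, hab⟩, heven⟩ := hmem J hJ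
  subst hab
  have hsubJ : Finset.Icc a b ⊆ Q := by
    rw [hsup]; exact Finset.le_sup (f := id) hJ
  simp only [id_eq] at h2J; rw [Finset.mem_Icc] at h2J
  have ha2 : a = 2 := by
    have h1 : 2 ≤ a := hlb a (hsubJ (Finset.mem_Icc.mpr ⟨le_refl _, h2J.1.trans h2J.2⟩))
    omega
  subst ha2
  rw [Nat.card_Icc] at heven
  obtain ⟨k, hk⟩ := heven
  have hb3 : 3 ≤ b := by omega
  have h3J : (3 : ℕ) ∈ Finset.Icc 2 b := Finset.mem_Icc.mpr ⟨by omega, hb3⟩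
  refine ⟨insert (Finset.Icc 4 b) (𝒥.erase (Finset.Icc 2 b)), ?_, ?_, ?_⟩
  · intro K hK
    rcases Finset.mem_insert.mp hK with h | h
    · subst h
      refine ⟨⟨4, b, rfl⟩, ?_⟩
      rw [Nat.card_Icc]
      exact ⟨k - 1, by omega⟩
    · exact hmem K (Finset.mem_of_mem_erase h)
  · rw [Finset.coe_insert]
    refine Set.PairwiseDisjoint.insert ?_ ?_
    · exact hdisj.subset (Finset.coe_subset.mpr (Finset.erase_subset _ _))
    · intro K hK hne
      have hK' : K ∈ 𝒥.erase (Finset.Icc 2 b) := hK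
      have hKJ : K ≠ Finset.Icc 2 b := Finset.ne_of_mem_erase hK'
      have hd : Disjoint (Finset.Icc 2 b) K :=
        hdisj hJ (Finset.mem_of_mem_erase hK') (Ne.symm hKJ)
      exact Disjoint.mono_left (Finset.Icc_subset_Icc_left (by omega : (2:ℕ) ≤ 4)) hd
  · ext x
    simp only [Finset.mem_sdiff, Finset.mem_insert, Finset.mem_singleton,
      Finset.mem_sup, id]
    constructor
    · rintro ⟨hxQ, hx23⟩
      rw [hsup, Finset.mem_sup] at hxQ
      obtain ⟨K, hK, hxK⟩ := hxQ
      simp only [id_eq] at hxK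
      by_cases hKJ : K = Finset.Icc 2 b
      · subst hKJ
        rw [Finset.mem_Icc] at hxK
        exact ⟨Finset.Icc 4 b, Or.inl rfl, Finset.mem_Icc.mpr ⟨by omega, hxK.2⟩⟩
      · exact ⟨K, Or.inr (Finset.mem_erase.mpr ⟨hKJ, hK⟩), hxK⟩
    · rintro ⟨K, hK, hxK⟩
      rcases hK with h | h
      · subst h
        rw [Finset.mem_Icc] at hxK
        exact ⟨hsubJ (Finset.mem_Icc.mpr ⟨by omega, hxK.2⟩), by omega⟩
      · have hKJ : K ≠ Finset.Icc 2 b := Finset.ne_of_mem_erase h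
        have hK𝒥 : K ∈ 𝒥 := Finset.mem_of_mem_erase h
        have hd : Disjoint (Finset.Icc 2 b) K := hdisj hJ hK𝒥 (Ne.symm hKJ)
        have hxQ : x ∈ Q := by
          rw [hsup]; exact (Finset.le_sup (f := id) hK𝒥 : _ ≤ _) hxK
        have h2K : (2 : ℕ) ∉ K :=
          Finset.disjoint_left.mp hd (Finset.mem_Icc.mpr ⟨le_refl _, by omega⟩)
        have h3K : (3 : ℕ) ∉ K := Finset.disjoint_left.mp hd h3J
        exact ⟨hxQ, by rintro (rfl | rfl) <;> [exact h2K hxK; exact h3K hxK]⟩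

/-- Nonnegativity of the coefficient of `c d c^{n-3}`.  Let `L` be the
`L`-vector of a rank `n+1` Eulerian poset (`n ≥ 3`): `L Q = 0` unless `Q` is an
even subset of `[1,n]`, and (Inequality Lemma) `(−1)^{|T|} ∑_{T ⊆ Q ⊆ V} L Q ≥ 0`
whenever `T ⊆ V ⊆ [1,n]` and every interval of `V` meets `T` in at most one
element.  Then, using that for even `Q ⊆ [1,n]` one has
`{2,3} ⊆ₑ Q ↔ (2 ∈ Q ∧ Q ⊆ [2,n])`, the cd-index coefficient
`[c d c^{n-3}] = (−2) ∑_{{2,3} ⊆ₑ Q} L Q = −2 ∑_{2 ∈ Q ⊆ [2,n]} L Q` is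
nonnegative. -/
theorem cdc_coefficient_nonneg (n : ℕ) (hn : 3 ≤ n) (L : Finset ℕ → ℚ)
    (hsupp : ∀ Q : Finset ℕ, ¬ (IsEvenSet Q ∧ Q ⊆ Finset.Icc 1 n) → L Q = 0)
    (hineq : ∀ T V : Finset ℕ, T ⊆ V → V ⊆ Finset.Icc 1 n →
      (∀ a b : ℕ, Finset.Icc a b ⊆ V → (Finset.Icc a b ∩ T).card ≤ 1) →
      0 ≤ (-1 : ℚ) ^ T.card * ∑ Q ∈ V.powerset, (if T ⊆ Q then L Q else 0)) :
    (∀ Q : Finset ℕ, IsEvenSet Q → Q ⊆ Finset.Icc 1 n →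
      (EvenlyContains {2, 3} Q ↔ (2 ∈ Q ∧ Q ⊆ Finset.Icc 2 n))) ∧
    (-2 : ℚ) * (∑ Q ∈ (Finset.Icc 1 n).powerset,
        if EvenlyContains {2, 3} Q then L Q else 0)
      = -2 * (∑ Q ∈ (Finset.Icc 2 n).powerset, if 2 ∈ Q then L Q else 0) ∧
    0 ≤ (-2 : ℚ) * (∑ Q ∈ (Finset.Icc 1 n).powerset,
        if EvenlyContains {2, 3} Q then L Q else 0) := by
  have part1 : ∀ Q : Finset ℕ, IsEvenSet Q → Q ⊆ Finset.Icc 1 n →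
      (EvenlyContains {2, 3} Q ↔ (2 ∈ Q ∧ Q ⊆ Finset.Icc 2 n)) := by
    intro Q hQ hQ1
    constructor
    · rintro ⟨-, -, hsub, hdiff⟩
      have h2 : 2 ∈ Q := hsub (Finset.mem_insert_self _ _)
      refine ⟨h2, fun x hx => ?_⟩
      have hx1 := Finset.mem_Icc.mp (hQ1 hx)
      rw [Finset.mem_Icc]
      refine ⟨?_, hx1.2⟩
      by_contra h
      have hx2 : x = 1 := by omega
      subst hx2
      have h1d : (1 : ℕ) ∈ Q \ {2, 3} := by
        simp only [Finset.mem_sdiff, Finset.mem_insert, Finset.mem_singleton]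
        exact ⟨hx, by omega⟩
      have hlb : ∀ y ∈ Q \ ({2, 3} : Finset ℕ), 1 ≤ y := by
        intro y hy
        exact (Finset.mem_Icc.mp (hQ1 (Finset.mem_sdiff.mp hy).1)).1
      have := even_succ_mem hdiff h1d hlb
      simp at this
    · rintro ⟨h2, hQ2⟩
      have hlb : ∀ y ∈ Q, 2 ≤ y := fun y hy => (Finset.mem_Icc.mp (hQ2 hy)).1
      have h3 : 3 ∈ Q := even_succ_mem hQ h2 hlb
      refine ⟨evenSet_pair, hQ, ?_, even_sdiff23 hQ h2 hlb⟩
      intro x hx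
      simp only [Finset.mem_insert, Finset.mem_singleton] at hx
      rcases hx with rfl | rfl
      · exact h2
      · exact h3
  have key : (∑ Q ∈ (Finset.Icc 1 n).powerset,
        if EvenlyContains {2, 3} Q then L Q else 0)
      = ∑ Q ∈ (Finset.Icc 1 n).powerset,
        if 2 ∈ Q ∧ Q ⊆ Finset.Icc 2 n then L Q else 0 := by
    apply Finset.sum_congr rfl
    intro Q hQ
    rw [Finset.mem_powerset] at hQ
    by_cases he : IsEvenSet Q
    · exact if_congr (part1 Q he hQ) rfl rfl
    · have hL : L Q = 0 := hsupp Q (fun h => he h.1)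
      simp [hL]
  have key2 : (∑ Q ∈ (Finset.Icc 1 n).powerset,
        if 2 ∈ Q ∧ Q ⊆ Finset.Icc 2 n then L Q else 0)
      = ∑ Q ∈ (Finset.Icc 2 n).powerset, if 2 ∈ Q then L Q else 0 := by
    rw [← Finset.sum_subset
      (Finset.powerset_mono.mpr (Finset.Icc_subset_Icc_left (by omega : (1:ℕ) ≤ 2)))]
    · apply Finset.sum_congr rfl
      intro Q hQ
      rw [Finset.mem_powerset] at hQ
      simp [hQ]
    · intro Q hQ hQ'
      rw [Finset.mem_powerset] at hQ'
      simp only [ite_eq_right_iff, and_imp]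
      intro _ h
      exact absurd h hQ'
  refine ⟨part1, by rw [key, key2], ?_⟩
  have h := hineq {2} (Finset.Icc 2 n)
    (Finset.singleton_subset_iff.mpr (Finset.mem_Icc.mpr ⟨le_refl _, by omega⟩))
    (Finset.Icc_subset_Icc_left (by omega : (1:ℕ) ≤ 2))
    (fun a b _ => le_trans (Finset.card_le_card Finset.inter_subset_right)
      (by simp))
  simp only [Finset.card_singleton, pow_one, Finset.singleton_subset_iff] at h
  rw [key, key2]
  nlinarith [h]
end
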